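/- Stability estimate for the Robin problem: If ψ = (ψ₁,…,ψₙ) is any vector-valued function in the domain of L, then for each i, 1 ≤ i ≤ n, and each (x,t) ∈ Ω̄, |ψ_i(x,t)| ≤ max { sup_{t∈[0,T]} max_i |(β₀ψ)_i(0,t)|, sup_{t∈[0,T]} max_i |(β₁ψ)_i(1,t)|, sup_{x∈[0,1]} max_i |ψ_i(x,0)|, (1/α)·sup_{(x,t)∈Ω} max_i |(Lψ)_i(x,t)| }. -/

import Mathlib

lemma deriv_nonpos_of_isMaxOn_left {f : ℝ → ℝ} {d p q : ℝ} (hpq : p < q)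
    (hmax : IsMaxOn f (Set.Icc p q) p) (hf : HasDerivWithinAt f d (Set.Icc p q) p) : d ≤ 0 := by
  have hy : q - p ∈ posTangentConeAt (Set.Icc p q) p :=
    sub_mem_posTangentConeAt_of_segment_subset (by rw [segment_eq_Icc hpq.le])
  have h := hmax.localize.hasFDerivWithinAt_nonpos hf.hasFDerivWithinAt hy
  simp only [ContinuousLinearMap.toSpanSingleton_apply, smul_eq_mul] at h
  nlinarith [sub_pos.2 hpq]

lemma deriv_nonneg_of_isMaxOn_right {f : ℝ → ℝ} {d p q : ℝ} (hpq : p < q)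
    (hmax : IsMaxOn f (Set.Icc p q) q) (hf : HasDerivWithinAt f d (Set.Icc p q) q) : 0 ≤ d := by
  have hy : p - q ∈ posTangentConeAt (Set.Icc p q) q :=
    sub_mem_posTangentConeAt_of_segment_subset
      (by rw [segment_symm, segment_eq_Icc hpq.le])
  have h := hmax.localize.hasFDerivWithinAt_nonpos hf.hasFDerivWithinAt hy
  simp only [ContinuousLinearMap.toSpanSingleton_apply, smul_eq_mul] at h
  nlinarith [sub_pos.2 hpq]

lemma second_deriv_nonpos_at_interior_max {f f' : ℝ → ℝ} {x₀ f'' a b : ℝ}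
    (hx₀ : x₀ ∈ Set.Ioo a b)
    (hf_cont : ContinuousOn f (Set.Icc a b))
    (hf' : ∀ x ∈ Set.Ioo a b, HasDerivAt f (f' x) x)
    (hf'0 : f' x₀ = 0)
    (hf'' : HasDerivWithinAt f' f'' (Set.Ioo a b) x₀)
    (hmax : ∀ x ∈ Set.Icc a b, f x ≤ f x₀) : f'' ≤ 0 := by
  by_contra h
  push_neg at h
  have hslope : ∀ᶠ y in nhdsWithin x₀ (Set.Ioo a b \ {x₀}), 0 < slope f' x₀ y :=
    (hasDerivWithinAt_iff_tendsto_slope.1 hf'').eventually (lt_mem_nhds h)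
  rw [eventually_nhdsWithin_iff, Metric.eventually_nhds_iff] at hslope
  obtain ⟨δ, hδ, hball⟩ := hslope
  set c : ℝ := min (x₀ + δ / 2) ((x₀ + b) / 2) with hc
  have hxc : x₀ < c := lt_min (by linarith) (by linarith [hx₀.2])
  have hcb : c < b := lt_of_le_of_lt (min_le_right _ _) (by linarith [hx₀.2])
  have hpos : ∀ y ∈ Set.Ioo x₀ c, 0 < f' y := by
    intro y hy
    have hyI : y ∈ Set.Ioo a b := ⟨lt_trans hx₀.1 hy.1, lt_trans hy.2 hcb⟩
    have hym : y ∈ Set.Ioo a b \ {x₀} := ⟨hyI, by simp [ne_of_gt hy.1]⟩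
    have hdist : dist y x₀ < δ := by
      rw [Real.dist_eq, abs_of_pos (sub_pos.2 hy.1)]
      have : y < x₀ + δ / 2 := lt_of_lt_of_le hy.2 (min_le_left _ _)
      linarith
    have hs := hball hdist hym
    rw [slope_def_field, hf'0, sub_zero] at hs
    have hyx : 0 < y - x₀ := sub_pos.2 hy.1
    exact (div_pos_iff.1 hs).elim (fun h => h.1) (fun h => absurd h.2 (by linarith))
  have hsub : Set.Icc x₀ c ⊆ Set.Icc a b :=
    Set.Icc_subset_Icc hx₀.1.le hcb.le
  have hmono : StrictMonoOn f (Set.Icc x₀ c) := by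
    apply strictMonoOn_of_deriv_pos (convex_Icc _ _) (hf_cont.mono hsub)
    intro y hy
    rw [interior_Icc] at hy
    have hyI : y ∈ Set.Ioo a b := ⟨lt_trans hx₀.1 hy.1, lt_trans hy.2 hcb⟩
    rw [(hf' y hyI).deriv]
    exact hpos y hy
  have h1 : f x₀ < f c :=
    hmono (Set.left_mem_Icc.2 hxc.le) (Set.right_mem_Icc.2 hxc.le) hxc
  exact absurd (hmax c (hsub (Set.right_mem_Icc.2 hxc.le))) (not_le.2 h1)



/- STATEMENT 1: Stability estimate for the Robin problem.
The suprema appearing in the estimate are rendered by quantifying over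
arbitrary upper bounds `b0, b1, bB, bL` of the corresponding quantities:
this is equivalent to the estimate with the (least upper bound) suprema. -/
theorem stmt_1
    (n : ℕ) (T : ℝ) (hT : 0 < T)
    (ε : Fin (n + 1) → ℝ)
    (hε0 : ∀ i, 0 < ε i) (hε1 : ∀ i, ε i < 1) (hεm : StrictMono ε)
    (a : Fin (n + 1) → Fin (n + 1) → ℝ → ℝ → ℝ)
    (ha_cont : ∀ i j, ContinuousOn (fun p : ℝ × ℝ => a i j p.1 p.2)
      (Set.Icc 0 1 ×ˢ Set.Icc 0 T))
    (ha_diag : ∀ i, ∀ x ∈ Set.Icc (0:ℝ) 1, ∀ t ∈ Set.Icc (0:ℝ) T,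
      ∑ j ∈ Finset.univ.erase i, |a i j x t| < a i i x t)
    (ha_off : ∀ i j, i ≠ j → ∀ x ∈ Set.Icc (0:ℝ) 1, ∀ t ∈ Set.Icc (0:ℝ) T,
      a i j x t ≤ 0)
    (α : ℝ) (hα0 : 0 < α)
    (hα : ∀ i, ∀ x ∈ Set.Icc (0:ℝ) 1, ∀ t ∈ Set.Icc (0:ℝ) T, α < ∑ j, a i j x t)
    (ψ ψx ψt ψxx : Fin (n + 1) → ℝ → ℝ → ℝ)
    -- ψ is in the domain of L :
    (hψ_cont : ∀ i, ContinuousOn (fun p : ℝ × ℝ => ψ i p.1 p.2)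
      (Set.Icc 0 1 ×ˢ Set.Icc 0 T))
    (hψx_cont : ∀ i, ContinuousOn (fun p : ℝ × ℝ => ψx i p.1 p.2)
      (Set.Icc 0 1 ×ˢ Set.Icc 0 T))
    (hψx : ∀ i, ∀ t ∈ Set.Icc (0:ℝ) T, ∀ x ∈ Set.Icc (0:ℝ) 1,
      HasDerivWithinAt (fun y => ψ i y t) (ψx i x t) (Set.Icc 0 1) x)
    (hψt : ∀ i, ∀ x ∈ Set.Ioo (0:ℝ) 1, ∀ t ∈ Set.Ioc (0:ℝ) T,
      HasDerivWithinAt (fun s => ψ i x s) (ψt i x t) (Set.Icc 0 T) t)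
    (hψxx : ∀ i, ∀ t ∈ Set.Ioc (0:ℝ) T, ∀ x ∈ Set.Ioo (0:ℝ) 1,
      HasDerivWithinAt (fun y => ψx i y t) (ψxx i x t) (Set.Ioo 0 1) x)
    (hψt_cont : ∀ i, ContinuousOn (fun p : ℝ × ℝ => ψt i p.1 p.2)
      (Set.Ioo 0 1 ×ˢ Set.Ioc 0 T))
    (hψxx_cont : ∀ i, ContinuousOn (fun p : ℝ × ℝ => ψxx i p.1 p.2)
      (Set.Ioo 0 1 ×ˢ Set.Ioc 0 T))
    -- arbitrary upper bounds for the four suprema :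
    (b0 b1 bB bL : ℝ)
    (hb0 : ∀ i, ∀ t ∈ Set.Icc (0:ℝ) T, |ψ i 0 t - Real.sqrt (ε i) * ψx i 0 t| ≤ b0)
    (hb1 : ∀ i, ∀ t ∈ Set.Icc (0:ℝ) T, |ψ i 1 t + Real.sqrt (ε i) * ψx i 1 t| ≤ b1)
    (hbB : ∀ i, ∀ x ∈ Set.Icc (0:ℝ) 1, |ψ i x 0| ≤ bB)
    (hbL : ∀ i, ∀ x ∈ Set.Ioo (0:ℝ) 1, ∀ t ∈ Set.Ioc (0:ℝ) T,
      |ψt i x t - ε i * ψxx i x t + ∑ j, a i j x t * ψ j x t| ≤ bL) :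
    ∀ i, ∀ x ∈ Set.Icc (0:ℝ) 1, ∀ t ∈ Set.Icc (0:ℝ) T,
      |ψ i x t| ≤ max (max b0 b1) (max bB (bL / α)) := by
  classical
  have hKc : IsCompact (Set.Icc (0:ℝ) 1 ×ˢ Set.Icc (0:ℝ) T) := isCompact_Icc.prod isCompact_Icc
  have hKne : (Set.Icc (0:ℝ) 1 ×ˢ Set.Icc (0:ℝ) T).Nonempty :=
    ⟨(0, 0), Set.mk_mem_prod ⟨le_refl 0, zero_le_one⟩ ⟨le_refl 0, hT.le⟩⟩
  have hmaxi : ∀ i, ∃ p ∈ (Set.Icc (0:ℝ) 1 ×ˢ Set.Icc (0:ℝ) T),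
      IsMaxOn (fun q : ℝ × ℝ => |ψ i q.1 q.2|) (Set.Icc (0:ℝ) 1 ×ˢ Set.Icc (0:ℝ) T) p :=
    fun i => hKc.exists_isMaxOn hKne (hψ_cont i).abs
  choose p hpK hpM using hmaxi
  obtain ⟨i₀, -, hi₀⟩ := Finset.exists_max_image Finset.univ
    (fun i => |ψ i (p i).1 (p i).2|) ⟨0, Finset.mem_univ 0⟩
  set x₀ := (p i₀).1 with hx₀def
  set t₀ := (p i₀).2 with ht₀def
  set S := |ψ i₀ x₀ t₀| with hSdef
  have hSnn : 0 ≤ S := abs_nonneg _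
  have hx₀I : x₀ ∈ Set.Icc (0:ℝ) 1 := (hpK i₀).1
  have ht₀I : t₀ ∈ Set.Icc (0:ℝ) T := (hpK i₀).2
  have hSb : ∀ j, ∀ x ∈ Set.Icc (0:ℝ) 1, ∀ t ∈ Set.Icc (0:ℝ) T, |ψ j x t| ≤ S := by
    intro j x hx t ht
    have h1 : |ψ j x t| ≤ |ψ j (p j).1 (p j).2| :=
      isMaxOn_iff.mp (hpM j) (x, t) (Set.mk_mem_prod hx ht)
    exact h1.trans (hi₀ j (Finset.mem_univ j))
  suffices hS : S ≤ max (max b0 b1) (max bB (bL / α)) by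
    intro i x hx t ht; exact (hSb i x hx t ht).trans hS
  obtain ⟨σ, hσ, hσS⟩ : ∃ σ : ℝ, (σ = 1 ∨ σ = -1) ∧ σ * ψ i₀ x₀ t₀ = S := by
    rcases abs_cases (ψ i₀ x₀ t₀) with ⟨h1, -⟩ | ⟨h1, -⟩
    · exact ⟨1, Or.inl rfl, by rw [one_mul, hSdef, h1]⟩
    · exact ⟨-1, Or.inr rfl, by rw [hSdef, h1]; ring⟩
  have habsσ : ∀ y : ℝ, |σ * y| = |y| := by
    intro y; rcases hσ with h | h <;> simp [h, abs_mul]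
  have hσb : ∀ j, ∀ x ∈ Set.Icc (0:ℝ) 1, ∀ t ∈ Set.Icc (0:ℝ) T, σ * ψ j x t ≤ S := by
    intro j x hx t ht
    calc σ * ψ j x t ≤ |σ * ψ j x t| := le_abs_self _
    _ = |ψ j x t| := habsσ _
    _ ≤ S := hSb j x hx t ht
  rcases eq_or_lt_of_le ht₀I.1 with ht0 | ht0
  · -- t₀ = 0
    have h1 : S ≤ bB := by rw [hSdef, ← ht0]; exact hbB i₀ x₀ hx₀I
    exact h1.trans (le_max_of_le_right (le_max_left _ _))
  rcases eq_or_lt_of_le hx₀I.1 with hxl | hxl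
  · -- x₀ = 0
    have hder : HasDerivWithinAt (fun y => σ * ψ i₀ y t₀) (σ * ψx i₀ x₀ t₀) (Set.Icc 0 1) x₀ :=
      (hψx i₀ t₀ ht₀I x₀ hx₀I).const_mul σ
    have hmax0 : IsMaxOn (fun y => σ * ψ i₀ y t₀) (Set.Icc 0 1) x₀ :=
      isMaxOn_iff.mpr fun y hy => by rw [hσS]; exact hσb i₀ y hy t₀ ht₀I
    rw [← hxl] at hder hmax0
    have hd0 : σ * ψx i₀ 0 t₀ ≤ 0 := deriv_nonpos_of_isMaxOn_left one_pos hmax0 hder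
    have hσS0 : σ * ψ i₀ 0 t₀ = S := by rw [← hxl] at hσS; exact hσS
    have hsq : 0 ≤ Real.sqrt (ε i₀) := Real.sqrt_nonneg _
    have h1 : S ≤ σ * (ψ i₀ 0 t₀ - Real.sqrt (ε i₀) * ψx i₀ 0 t₀) := by nlinarith
    have h2 : S ≤ b0 := by
      calc S ≤ σ * (ψ i₀ 0 t₀ - Real.sqrt (ε i₀) * ψx i₀ 0 t₀) := h1
      _ ≤ |σ * (ψ i₀ 0 t₀ - Real.sqrt (ε i₀) * ψx i₀ 0 t₀)| := le_abs_self _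
      _ = |ψ i₀ 0 t₀ - Real.sqrt (ε i₀) * ψx i₀ 0 t₀| := habsσ _
      _ ≤ b0 := hb0 i₀ t₀ ht₀I
    exact h2.trans (le_max_of_le_left (le_max_left _ _))
  rcases eq_or_lt_of_le hx₀I.2 with hxr | hxr
  · -- x₀ = 1
    have hder : HasDerivWithinAt (fun y => σ * ψ i₀ y t₀) (σ * ψx i₀ x₀ t₀) (Set.Icc 0 1) x₀ :=
      (hψx i₀ t₀ ht₀I x₀ hx₀I).const_mul σ
    have hmax0 : IsMaxOn (fun y => σ * ψ i₀ y t₀) (Set.Icc 0 1) x₀ :=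
      isMaxOn_iff.mpr fun y hy => by rw [hσS]; exact hσb i₀ y hy t₀ ht₀I
    rw [hxr] at hder hmax0
    have hd0 : 0 ≤ σ * ψx i₀ 1 t₀ := deriv_nonneg_of_isMaxOn_right one_pos hmax0 hder
    have hσS0 : σ * ψ i₀ 1 t₀ = S := by rw [hxr] at hσS; exact hσS
    have hsq : 0 ≤ Real.sqrt (ε i₀) := Real.sqrt_nonneg _
    have h1 : S ≤ σ * (ψ i₀ 1 t₀ + Real.sqrt (ε i₀) * ψx i₀ 1 t₀) := by nlinarith
    have h2 : S ≤ b1 := by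
      calc S ≤ σ * (ψ i₀ 1 t₀ + Real.sqrt (ε i₀) * ψx i₀ 1 t₀) := h1
      _ ≤ |σ * (ψ i₀ 1 t₀ + Real.sqrt (ε i₀) * ψx i₀ 1 t₀)| := le_abs_self _
      _ = |ψ i₀ 1 t₀ + Real.sqrt (ε i₀) * ψx i₀ 1 t₀| := habsσ _
      _ ≤ b1 := hb1 i₀ t₀ ht₀I
    exact h2.trans (le_max_of_le_left (le_max_right _ _))
  -- interior case
  have hx₀O : x₀ ∈ Set.Ioo (0:ℝ) 1 := ⟨hxl, hxr⟩
  have ht₀O : t₀ ∈ Set.Ioc (0:ℝ) T := ⟨ht0, ht₀I.2⟩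
  -- time derivative nonneg
  have hmt : IsMaxOn (fun s => σ * ψ i₀ x₀ s) (Set.Icc 0 t₀) t₀ :=
    isMaxOn_iff.mpr fun s hs => by
      rw [hσS]; exact hσb i₀ x₀ hx₀I s ⟨hs.1, hs.2.trans ht₀I.2⟩
  have hdt : HasDerivWithinAt (fun s => σ * ψ i₀ x₀ s) (σ * ψt i₀ x₀ t₀) (Set.Icc 0 t₀) t₀ :=
    ((hψt i₀ x₀ hx₀O t₀ ht₀O).const_mul σ).mono (Set.Icc_subset_Icc le_rfl ht₀I.2)
  have hψt0 : 0 ≤ σ * ψt i₀ x₀ t₀ := deriv_nonneg_of_isMaxOn_right ht0 hmt hdt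
  -- space derivative zero
  have hdx : HasDerivAt (fun y => σ * ψ i₀ y t₀) (σ * ψx i₀ x₀ t₀) x₀ :=
    ((hψx i₀ t₀ ht₀I x₀ hx₀I).const_mul σ).hasDerivAt (Icc_mem_nhds hxl hxr)
  have hlmax : IsLocalMax (fun y => σ * ψ i₀ y t₀) x₀ := by
    filter_upwards [Icc_mem_nhds hxl hxr] with y hy
    rw [hσS]; exact hσb i₀ y hy t₀ ht₀I
  have hψx0 : σ * ψx i₀ x₀ t₀ = 0 := hlmax.hasDerivAt_eq_zero hdx
  -- second derivative nonpos
  have hcont1 : ContinuousOn (fun y : ℝ => σ * ψ i₀ y t₀) (Set.Icc 0 1) := by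
    apply continuousOn_const.mul
    exact (hψ_cont i₀).comp ((continuous_id.prodMk continuous_const).continuousOn)
      (fun y hy => Set.mk_mem_prod hy ht₀I)
  have hψxx0 : σ * ψxx i₀ x₀ t₀ ≤ 0 := by
    apply second_deriv_nonpos_at_interior_max (f' := fun y => σ * ψx i₀ y t₀)
      hx₀O hcont1 ?_ hψx0 ((hψxx i₀ t₀ ht₀O x₀ hx₀O).const_mul σ) ?_
    · intro y hy
      exact ((hψx i₀ t₀ ht₀I y (Set.Ioo_subset_Icc_self hy)).const_mul σ).hasDerivAt
        (Icc_mem_nhds hy.1 hy.2)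
    · intro y hy
      rw [hσS]; exact hσb i₀ y hy t₀ ht₀I
  -- final algebra
  have hsum : α * S ≤ ∑ j, a i₀ j x₀ t₀ * (σ * ψ j x₀ t₀) := by
    calc α * S ≤ (∑ j, a i₀ j x₀ t₀) * S :=
          mul_le_mul_of_nonneg_right (hα i₀ x₀ hx₀I t₀ ht₀I).le hSnn
    _ = ∑ j, a i₀ j x₀ t₀ * S := Finset.sum_mul _ _ _
    _ ≤ ∑ j, a i₀ j x₀ t₀ * (σ * ψ j x₀ t₀) := by
        apply Finset.sum_le_sum
        intro j _
        rcases eq_or_ne j i₀ with rfl | hj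
        · rw [hσS]
        · exact mul_le_mul_of_nonpos_left (hσb j x₀ hx₀I t₀ ht₀I)
            (ha_off i₀ j (Ne.symm hj) x₀ hx₀I t₀ ht₀I)
  have expand : σ * (ψt i₀ x₀ t₀ - ε i₀ * ψxx i₀ x₀ t₀ + ∑ j, a i₀ j x₀ t₀ * ψ j x₀ t₀)
      = σ * ψt i₀ x₀ t₀ - ε i₀ * (σ * ψxx i₀ x₀ t₀)
        + ∑ j, a i₀ j x₀ t₀ * (σ * ψ j x₀ t₀) := by
    have h1 : ∑ j, a i₀ j x₀ t₀ * (σ * ψ j x₀ t₀)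
        = ∑ j, σ * (a i₀ j x₀ t₀ * ψ j x₀ t₀) :=
      Finset.sum_congr rfl fun j _ => by ring
    rw [h1, ← Finset.mul_sum]; ring
  have hεxx : ε i₀ * (σ * ψxx i₀ x₀ t₀) ≤ 0 :=
    mul_nonpos_of_nonneg_of_nonpos (hε0 i₀).le hψxx0
  have hαS : α * S ≤ bL := by
    calc α * S ≤ σ * (ψt i₀ x₀ t₀ - ε i₀ * ψxx i₀ x₀ t₀ + ∑ j, a i₀ j x₀ t₀ * ψ j x₀ t₀) := by
          rw [expand]; linarith
    _ ≤ |σ * (ψt i₀ x₀ t₀ - ε i₀ * ψxx i₀ x₀ t₀ + ∑ j, a i₀ j x₀ t₀ * ψ j x₀ t₀)| :=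
          le_abs_self _
    _ = |ψt i₀ x₀ t₀ - ε i₀ * ψxx i₀ x₀ t₀ + ∑ j, a i₀ j x₀ t₀ * ψ j x₀ t₀| := habsσ _
    _ ≤ bL := hbL i₀ x₀ hx₀O t₀ ht₀O
  have h2 : S ≤ bL / α := (le_div_iff₀ hα0).mpr (by linarith)
  exact h2.trans (le_max_of_le_right (le_max_right _ _))
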